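/- Let F : ℝ^n → ℝ^n be continuously differentiable, V ⊆ ℝ^n bounded, open, and with DF invertible at every point of V, and let S ⊆ ℝ^n be a connected set such that F(V) ∩ S is nonempty and F(∂V) ∩ S is empty. Then S ⊆ F(V), i.e., every s ∈ S has a preimage in V. -/

import Mathlib

/-- Existence of preimages: if `V` is bounded open with invertible derivative of
the `C¹` map `F` everywhere on `V`, `S` is connected, `F(V) ∩ S ≠ ∅`, and
`F(∂V) ∩ S = ∅`, then `S ⊆ F '' V`. -/
theorem exists_preimage_of_connected
    {n : ℕ} (F : (Fin n → ℝ) → (Fin n → ℝ)) (hF : ContDiff ℝ 1 F)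
    (V : Set (Fin n → ℝ)) (hVb : Bornology.IsBounded V) (hVo : IsOpen V)
    (hJ : ∀ v ∈ V, Function.Bijective (fderiv ℝ F v))
    (S : Set (Fin n → ℝ)) (hS : IsPreconnected S)
    (hne : (F '' V ∩ S).Nonempty)
    (hfr : F '' (frontier V) ∩ S = ∅) :
    S ⊆ F '' V := by
  -- F '' V is open
  have hopen : IsOpen (F '' V) := by
    rw [isOpen_iff_mem_nhds]
    rintro y ⟨a, haV, rfl⟩
    have hd : HasStrictFDerivAt F (fderiv ℝ F a) a :=
      hF.contDiffAt.hasStrictFDerivAt one_ne_zero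
    let e : (Fin n → ℝ) ≃L[ℝ] (Fin n → ℝ) :=
      (LinearEquiv.ofBijective (fderiv ℝ F a).toLinearMap (hJ a haV)).toContinuousLinearEquiv
    have he : (e : (Fin n → ℝ) →L[ℝ] (Fin n → ℝ)) = fderiv ℝ F a := by
      ext x; rfl
    have hd' : HasStrictFDerivAt F (e : (Fin n → ℝ) →L[ℝ] (Fin n → ℝ)) a := he ▸ hd
    have := hd'.map_nhds_eq_of_equiv
    rw [← this]
    exact Filter.image_mem_map (hVo.mem_nhds haV)
  -- F '' (closure V) is compact, hence closed
  have hcomp : IsCompact (F '' closure V) :=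
    (hVb.isCompact_closure).image hF.continuous
  have hclosed : IsClosed (F '' closure V) := hcomp.isClosed
  -- the complement open set
  set u := F '' V
  set v := (F '' closure V)ᶜ
  have hvopen : IsOpen v := hclosed.isOpen_compl
  have hcover : S ⊆ u ∪ v := by
    intro s hsS
    by_cases h : s ∈ F '' closure V
    · rcases h with ⟨x, hx, rfl⟩
      rcases (closure_eq_self_union_frontier V ▸ hx) with hx' | hx'
      · exact Or.inl ⟨x, hx', rfl⟩
      · exfalso
        have : F x ∈ F '' frontier V ∩ S := ⟨⟨x, hx', rfl⟩, hsS⟩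
        rw [hfr] at this
        exact this
    · exact Or.inr h
  have hdisj : S ∩ (u ∩ v) = ∅ := by
    ext s
    simp only [Set.mem_inter_iff, Set.mem_empty_iff_false, iff_false, not_and]
    intro _ hu hv
    exact hv (Set.image_mono (f := F) subset_closure hu)
  have hSv : S ∩ v = ∅ := by
    by_contra h
    have hSu : (S ∩ u).Nonempty := ⟨hne.choose, hne.choose_spec.2, hne.choose_spec.1⟩
    have hSv' : (S ∩ v).Nonempty := Set.nonempty_iff_ne_empty.2 h
    rcases hS u v hopen hvopen hcover hSu hSv' with ⟨x, hx⟩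
    have : x ∈ S ∩ (u ∩ v) := ⟨hx.1, hx.2⟩
    rw [hdisj] at this
    exact this
  intro s hsS
  rcases hcover hsS with h | h
  · exact h
  · exfalso
    have : s ∈ S ∩ v := ⟨hsS, h⟩
    rw [hSv] at this
    exact this
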